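/- Let Γ ⊆ D be compact such that for every z ∈ Γ the map t ↦ h(t,z) has only isolated zeros in [0,T], assume F1 and F2 are locally Lipschitz with respect to x, and suppose f(z) ≠ 0 for every z ∈ Γ. Then there exists δ₀ ∈ (0,1] such that f_δ(z) ≠ 0 for all z ∈ Γ and all δ ∈ (0,δ₀]. -/

import Mathlib

open Set Filter MeasureTheory Topology

private lemma sliceCont {E F : Type*} [TopologicalSpace E] [TopologicalSpace F]
    {D : Set E} (hD : IsOpen D) {G : ℝ → E → F}
    (hG : ContinuousOn (fun p : ℝ × E => G p.1 p.2) (univ ×ˢ D)) {x : E} (hx : x ∈ D) :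
    Continuous fun t => G t x := by
  rw [continuous_iff_continuousAt]
  intro t
  have h1 : ContinuousAt (fun p : ℝ × E => G p.1 p.2) (t, x) :=
    hG.continuousAt ((isOpen_univ.prod hD).mem_nhds ⟨mem_univ _, hx⟩)
  have h2 : ContinuousAt (fun s : ℝ => (s, x)) t :=
    (continuous_id.prodMk continuous_const).continuousAt
  exact Filter.Tendsto.comp h1 h2

private lemma sliceContAt {E F : Type*} [TopologicalSpace E] [TopologicalSpace F]
    {D : Set E} (hD : IsOpen D) {G : ℝ → E → F}
    (hG : ContinuousOn (fun p : ℝ × E => G p.1 p.2) (univ ×ˢ D)) {x : E} (hx : x ∈ D) (t : ℝ) :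
    ContinuousAt (fun y => G t y) x := by
  have h1 : ContinuousAt (fun p : ℝ × E => G p.1 p.2) (t, x) :=
    hG.continuousAt ((isOpen_univ.prod hD).mem_nhds ⟨mem_univ _, hx⟩)
  have h2 : ContinuousAt (fun y : E => (t, y)) x :=
    (continuous_const.prodMk continuous_id).continuousAt
  exact ContinuousAt.comp (g := fun p : ℝ × E => G p.1 p.2) h1 h2

set_option maxHeartbeats 1000000

/-- If `f` does not vanish on a compact set `Γ` on which `t ↦ h(t,z)` has only isolated zeros,
and `F1`, `F2` are locally Lipschitz in `x`, then the regularized averaged functions `f_δ`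
do not vanish on `Γ` for all sufficiently small `δ > 0`. -/
theorem regularized_averaged_nonvanishing {n : ℕ} (T : ℝ) (hT : 0 < T)
    (D : Set (EuclideanSpace ℝ (Fin n))) (hD : IsOpen D)
    (F1 F2 : ℝ → EuclideanSpace ℝ (Fin n) → EuclideanSpace ℝ (Fin n))
    (h : ℝ → EuclideanSpace ℝ (Fin n) → ℝ)
    (hF1c : ContinuousOn (fun p : ℝ × EuclideanSpace ℝ (Fin n) => F1 p.1 p.2) (univ ×ˢ D))
    (hF2c : ContinuousOn (fun p : ℝ × EuclideanSpace ℝ (Fin n) => F2 p.1 p.2) (univ ×ˢ D))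
    (hhc : ContinuousOn (fun p : ℝ × EuclideanSpace ℝ (Fin n) => h p.1 p.2) (univ ×ˢ D))
    (hF1per : ∀ t x, F1 (t + T) x = F1 t x)
    (hF2per : ∀ t x, F2 (t + T) x = F2 t x)
    (hhper : ∀ t x, h (t + T) x = h t x)
    (hlipF1 : ∀ x₀ ∈ D, ∃ U ∈ nhds x₀, ∃ L : ℝ, ∀ t : ℝ, ∀ x₁ ∈ U ∩ D, ∀ x₂ ∈ U ∩ D,
      ‖F1 t x₁ - F1 t x₂‖ ≤ L * ‖x₁ - x₂‖)
    (hlipF2 : ∀ x₀ ∈ D, ∃ U ∈ nhds x₀, ∃ L : ℝ, ∀ t : ℝ, ∀ x₁ ∈ U ∩ D, ∀ x₂ ∈ U ∩ D,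
      ‖F2 t x₁ - F2 t x₂‖ ≤ L * ‖x₁ - x₂‖)
    (φ : ℝ → ℝ)
    (hφ₁ : ∀ u : ℝ, 1 ≤ u → φ u = 1)
    (hφ₂ : ∀ u : ℝ, -1 < u → u < 1 → φ u = u)
    (hφ₃ : ∀ u : ℝ, u ≤ -1 → φ u = -1)
    (Γ : Set (EuclideanSpace ℝ (Fin n))) (hΓ : IsCompact Γ) (hΓD : Γ ⊆ D)
    (hiso : ∀ z ∈ Γ, ∀ t₀ ∈ {t ∈ Icc (0 : ℝ) T | h t z = 0}, ∃ η > 0,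
      ∀ t ∈ {t ∈ Icc (0 : ℝ) T | h t z = 0}, |t - t₀| < η → t = t₀)
    (hf : ∀ z ∈ Γ, (∫ t in (0 : ℝ)..T, (F1 t z + Real.sign (h t z) • F2 t z)) ≠ 0) :
    ∃ δ₀ ∈ Ioc (0 : ℝ) 1, ∀ z ∈ Γ, ∀ δ ∈ Ioc (0 : ℝ) δ₀,
      (∫ t in (0 : ℝ)..T, (F1 t z + φ (h t z / δ) • F2 t z)) ≠ 0 := by
  classical
  by_contra hcon
  push_neg at hcon
  have hk : ∀ k : ℕ, ∃ z ∈ Γ, ∃ δ ∈ Ioc (0:ℝ) (1/((k:ℝ)+1)),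
      (∫ t in (0:ℝ)..T, (F1 t z + φ (h t z / δ) • F2 t z)) = 0 := by
    intro k
    refine hcon (1/((k:ℝ)+1)) ⟨by positivity, ?_⟩
    rw [div_le_one (by positivity)]
    linarith [Nat.cast_nonneg (α := ℝ) k]
  choose z hzΓ δ hδ hint using hk
  obtain ⟨z₀, hz₀, g, hg, hzg⟩ := hΓ.tendsto_subseq hzΓ
  set w : ℕ → EuclideanSpace ℝ (Fin n) := z ∘ g with hw
  set ε : ℕ → ℝ := δ ∘ g with hεdef
  have hεpos : ∀ k, 0 < ε k := fun k => (hδ (g k)).1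
  have hδ0 : Tendsto δ atTop (𝓝 0) :=
    squeeze_zero (fun k => (hδ k).1.le) (fun k => (hδ k).2)
      tendsto_one_div_add_atTop_nhds_zero_nat
  have hε0 : Tendsto ε atTop (𝓝 0) := hδ0.comp hg.tendsto_atTop
  -- the transition function is `max (-1) (min 1 ·)`
  have hφ : ∀ u : ℝ, φ u = max (-1) (min 1 u) := by
    intro u
    rcases le_or_gt 1 u with h1 | h1
    · rw [hφ₁ u h1, min_eq_left h1, max_eq_right (by norm_num)]
    · rcases le_or_gt u (-1) with h2 | h2
      · rw [hφ₃ u h2, min_eq_right (by linarith), max_eq_left h2]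
      · rw [hφ₂ u h2 h1, min_eq_right h1.le, max_eq_right h2.le]
  have hφabs : ∀ u : ℝ, |φ u| ≤ 1 := by
    intro u
    rw [hφ, abs_le]
    exact ⟨le_max_left _ _, max_le (by norm_num) (min_le_left _ _)⟩
  have hφcont : Continuous φ := by
    have he : φ = fun u => max (-1) (min 1 u) := funext hφ
    rw [he]
    exact continuous_const.max (continuous_const.min continuous_id)
  have hz₀D : z₀ ∈ D := hΓD hz₀
  -- bounds on the compact set
  have hKc : IsCompact ((Icc (0:ℝ) T) ×ˢ Γ) := isCompact_Icc.prod hΓ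
  have hsub : (Icc (0:ℝ) T) ×ˢ Γ ⊆ (univ : Set ℝ) ×ˢ D := prod_mono (subset_univ _) hΓD
  obtain ⟨M1, hM1⟩ := hKc.exists_bound_of_continuousOn (hF1c.mono hsub)
  obtain ⟨M2, hM2⟩ := hKc.exists_bound_of_continuousOn (hF2c.mono hsub)
  -- the zero set of `h (·, z₀)` is finite
  have hhz₀ : Continuous fun t => h t z₀ := sliceCont hD hhc hz₀D
  set Z : Set ℝ := {t ∈ Icc (0:ℝ) T | h t z₀ = 0} with hZdef
  have hZclosed : IsClosed Z := by
    have he : Z = Icc 0 T ∩ (fun t => h t z₀) ⁻¹' {0} := by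
      ext t; simp [hZdef]
    rw [he]
    exact isClosed_Icc.inter (isClosed_singleton.preimage hhz₀)
  have hZcomp : IsCompact Z :=
    isCompact_Icc.of_isClosed_subset hZclosed (fun t ht => ht.1)
  have hZdisc : DiscreteTopology Z := by
    rw [discreteTopology_subtype_iff]
    intro t₀ ht₀
    obtain ⟨η, hη, hηiso⟩ := hiso z₀ hz₀ t₀ ht₀
    rw [show (𝓝[≠] (t₀:ℝ)) = 𝓝[{t₀}ᶜ] t₀ from rfl, ← nhdsWithin_inter', ← empty_mem_iff_bot]
    refine mem_nhdsWithin.mpr ⟨Metric.ball t₀ η, Metric.isOpen_ball, Metric.mem_ball_self hη, ?_⟩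
    rintro t ⟨htb, htne, htZ⟩
    exact absurd (hηiso t htZ (by have hd := Metric.mem_ball.mp htb; rwa [Real.dist_eq] at hd)) (by simpa using htne)
  have hZfin : Z.Finite := hZcomp.finite (isDiscrete_iff_discreteTopology.mpr hZdisc)
  have hZ0 : volume Z = 0 := hZfin.measure_zero _
  -- dominated convergence
  have key : Tendsto (fun k => ∫ t in Ioc (0:ℝ) T, (F1 t (w k) + φ (h t (w k) / ε k) • F2 t (w k)))
      atTop (𝓝 (∫ t in Ioc (0:ℝ) T, (F1 t z₀ + Real.sign (h t z₀) • F2 t z₀))) := by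
    refine tendsto_integral_of_dominated_convergence (fun _ => M1 + M2) ?_ ?_ ?_ ?_
    · intro k
      have hwD : w k ∈ D := hΓD (hzΓ (g k))
      have hcont : Continuous fun t => F1 t (w k) + φ (h t (w k) / ε k) • F2 t (w k) :=
        (sliceCont hD hF1c hwD).add
          ((hφcont.comp ((sliceCont hD hhc hwD).div_const _)).smul (sliceCont hD hF2c hwD))
      exact hcont.aestronglyMeasurable
    · refine integrable_const_iff.mpr (Or.inr ?_)
      rw [isFiniteMeasure_restrict, ← lt_top_iff_ne_top]
      exact measure_Ioc_lt_top
    · intro k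
      filter_upwards [ae_restrict_mem measurableSet_Ioc] with t ht
      have hmem : (t, w k) ∈ (Icc (0:ℝ) T) ×ˢ Γ :=
        ⟨Ioc_subset_Icc_self ht, hzΓ (g k)⟩
      have h1 : ‖F1 t (w k)‖ ≤ M1 := hM1 (t, w k) hmem
      have h2 : ‖F2 t (w k)‖ ≤ M2 := hM2 (t, w k) hmem
      calc ‖F1 t (w k) + φ (h t (w k) / ε k) • F2 t (w k)‖
          ≤ ‖F1 t (w k)‖ + ‖φ (h t (w k) / ε k) • F2 t (w k)‖ := norm_add_le _ _
        _ ≤ M1 + M2 := by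
            have h3 : ‖φ (h t (w k) / ε k) • F2 t (w k)‖ ≤ M2 := by
              rw [norm_smul, Real.norm_eq_abs]
              calc |φ (h t (w k) / ε k)| * ‖F2 t (w k)‖
                  ≤ 1 * ‖F2 t (w k)‖ :=
                    mul_le_mul_of_nonneg_right (hφabs _) (norm_nonneg _)
                _ = ‖F2 t (w k)‖ := one_mul _
                _ ≤ M2 := h2
            linarith
    · have hae : ∀ᵐ t : ℝ, t ∉ Z := by
        rw [ae_iff]
        exact measure_mono_null (fun t ht => not_not.mp ht) hZ0
      filter_upwards [ae_restrict_mem measurableSet_Ioc, ae_restrict_of_ae hae] with t ht htZ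
      have hne : h t z₀ ≠ 0 := fun h0 => htZ ⟨Ioc_subset_Icc_self ht, h0⟩
      have hht : Tendsto (fun k => h t (w k)) atTop (𝓝 (h t z₀)) :=
        ((sliceContAt hD hhc hz₀D t).tendsto).comp hzg
      have hF1t : Tendsto (fun k => F1 t (w k)) atTop (𝓝 (F1 t z₀)) :=
        ((sliceContAt hD hF1c hz₀D t).tendsto).comp hzg
      have hF2t : Tendsto (fun k => F2 t (w k)) atTop (𝓝 (F2 t z₀)) :=
        ((sliceContAt hD hF2c hz₀D t).tendsto).comp hzg
      have hev : ∀ᶠ k in atTop, φ (h t (w k) / ε k) = Real.sign (h t z₀) := by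
        rcases hne.lt_or_gt with hc | hc
        · have h1 : ∀ᶠ k in atTop, h t (w k) < h t z₀ / 2 :=
            hht (Iio_mem_nhds (by linarith))
          have h2 : ∀ᶠ k in atTop, ε k < -(h t z₀) / 2 :=
            hε0 (Iio_mem_nhds (by linarith))
          filter_upwards [h1, h2] with k hk1 hk2
          have hle : h t (w k) / ε k ≤ -1 := by
            rw [div_le_iff₀ (hεpos k)]
            linarith
          rw [hφ₃ _ hle, Real.sign_of_neg hc]
        · have h1 : ∀ᶠ k in atTop, h t z₀ / 2 < h t (w k) :=
            hht (Ioi_mem_nhds (by linarith))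
          have h2 : ∀ᶠ k in atTop, ε k < h t z₀ / 2 :=
            hε0 (Iio_mem_nhds (by linarith))
          filter_upwards [h1, h2] with k hk1 hk2
          have hle : (1:ℝ) ≤ h t (w k) / ε k := by
            rw [le_div_iff₀ (hεpos k)]
            linarith
          rw [hφ₁ _ hle, Real.sign_of_pos hc]
      have hlim : Tendsto (fun k => F1 t (w k) + Real.sign (h t z₀) • F2 t (w k)) atTop
          (𝓝 (F1 t z₀ + Real.sign (h t z₀) • F2 t z₀)) :=
        hF1t.add (hF2t.const_smul _)
      exact hlim.congr' (hev.mono fun k hk => by simp only [hk])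
  have hzero : (fun k => ∫ t in Ioc (0:ℝ) T, (F1 t (w k) + φ (h t (w k) / ε k) • F2 t (w k)))
      = fun _ => (0 : EuclideanSpace ℝ (Fin n)) := by
    funext k
    rw [← intervalIntegral.integral_of_le hT.le]
    exact hint (g k)
  rw [hzero] at key
  refine hf z₀ hz₀ ?_
  rw [intervalIntegral.integral_of_le hT.le]
  exact tendsto_nhds_unique key tendsto_const_nhds
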